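/- Let σ ∈ ℝ, σ ≠ 0, let c ∈ ℝ, and set ω₀ := 0 and ω₁(u,v) := 2·arctan(exp(((σ−σ⁻¹)/2)·u + ((σ+σ⁻¹)/2)·v + c)). Then the pair (ω₀, ω₁) satisfies the Bäcklund system for the hyperbolic sine-Gordon equation with parameter σ: ∂ω₁/∂v − ∂ω₀/∂u = (σ·sin(ω₁+ω₀) + σ⁻¹·sin(ω₁−ω₀))/2 and ∂ω₁/∂u − ∂ω₀/∂v = (σ·sin(ω₁+ω₀) − σ⁻¹·sin(ω₁−ω₀))/2 at every point of ℝ². -/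

import Mathlib

lemma sin_two_arctan (x : ℝ) : Real.sin (2 * Real.arctan x) = 2 * x / (1 + x ^ 2) := by
  have h : (0:ℝ) < 1 + x ^ 2 := by positivity
  have hs : Real.sqrt (1 + x ^ 2) * Real.sqrt (1 + x ^ 2) = 1 + x ^ 2 :=
    Real.mul_self_sqrt h.le
  have hs0 : Real.sqrt (1 + x ^ 2) ≠ 0 := by positivity
  rw [Real.sin_two_mul, Real.sin_arctan, Real.cos_arctan]
  field_simp
  rw [Real.sq_sqrt h.le]

lemma deriv_soliton (k m t : ℝ) :
    deriv (fun t => 2 * Real.arctan (Real.exp (k * t + m))) t =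
      2 * (Real.exp (k * t + m) * k / (1 + Real.exp (k * t + m) ^ 2)) := by
  have h1 : HasDerivAt (fun t : ℝ => k * t + m) k t := by
    simpa using ((hasDerivAt_id t).const_mul k).add_const m
  have h2 := h1.exp
  have h3 := (Real.hasDerivAt_arctan (Real.exp (k * t + m))).comp t h2
  have h4 := h3.const_mul 2
  simp only [Function.comp_def] at h4
  rw [h4.deriv]
  field_simp



/-- Partial derivative with respect to the first variable `u`. -/
noncomputable def pdu (f : ℝ × ℝ → ℝ) (p : ℝ × ℝ) : ℝ :=
  deriv (fun u => f (u, p.2)) p.1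

/-- Partial derivative with respect to the second variable `v`. -/
noncomputable def pdv (f : ℝ × ℝ → ℝ) (p : ℝ × ℝ) : ℝ :=
  deriv (fun v => f (p.1, v)) p.2

/-- The pair `(ω₀, ω₁)` is related by the Bäcklund transformation for the
hyperbolic sine-Gordon equation with parameter `σ`. -/
def BacklundSG (σ : ℝ) (ω₀ ω₁ : ℝ × ℝ → ℝ) : Prop :=
  ∀ p : ℝ × ℝ,
    pdv ω₁ p - pdu ω₀ p =
      (σ * Real.sin (ω₁ p + ω₀ p) + σ⁻¹ * Real.sin (ω₁ p - ω₀ p)) / 2 ∧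
    pdu ω₁ p - pdv ω₀ p =
      (σ * Real.sin (ω₁ p + ω₀ p) - σ⁻¹ * Real.sin (ω₁ p - ω₀ p)) / 2

/-- The 0-soliton `ω₀ = 0` and the 1-soliton
`ω₁(u,v) = 2·arctan(exp(((σ−σ⁻¹)/2)·u + ((σ+σ⁻¹)/2)·v + c))`
satisfy the Bäcklund system for the hyperbolic sine-Gordon equation with parameter `σ`. -/
theorem zero_one_soliton_Backlund_hyperbolic_sineGordon
    (σ : ℝ) (hσ : σ ≠ 0) (c : ℝ) (ω₀ ω₁ : ℝ × ℝ → ℝ)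
    (hω₀ : ω₀ = fun _ : ℝ × ℝ => (0 : ℝ))
    (hω₁ : ω₁ = fun p : ℝ × ℝ =>
      2 * Real.arctan (Real.exp ((σ - σ⁻¹) / 2 * p.1 + (σ + σ⁻¹) / 2 * p.2 + c))) :
    BacklundSG σ ω₀ ω₁ := by
  subst hω₀ hω₁
  intro p
  obtain ⟨u, v⟩ := p
  set a : ℝ := (σ - σ⁻¹) / 2 with ha
  set b : ℝ := (σ + σ⁻¹) / 2 with hb
  set e : ℝ := Real.exp (a * u + b * v + c) with he
  have he0 : (0:ℝ) < 1 + e ^ 2 := by positivity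
  have hdu : pdu (fun p : ℝ × ℝ =>
      2 * Real.arctan (Real.exp (a * p.1 + b * p.2 + c))) (u, v)
      = 2 * (e * a / (1 + e ^ 2)) := by
    have h := deriv_soliton a (b * v + c) u
    have heq : (fun t : ℝ => 2 * Real.arctan (Real.exp (a * t + (b * v + c))))
        = (fun t : ℝ => 2 * Real.arctan (Real.exp (a * t + b * v + c))) := by
      funext t; ring_nf
    have he2 : Real.exp (a * u + (b * v + c)) = e := by rw [he]; ring_nf
    rw [heq, he2] at h
    simpa [pdu] using h
  have hdv : pdv (fun p : ℝ × ℝ =>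
      2 * Real.arctan (Real.exp (a * p.1 + b * p.2 + c))) (u, v)
      = 2 * (e * b / (1 + e ^ 2)) := by
    have h := deriv_soliton b (a * u + c) v
    have heq : (fun t : ℝ => 2 * Real.arctan (Real.exp (b * t + (a * u + c))))
        = (fun t : ℝ => 2 * Real.arctan (Real.exp (a * u + b * t + c))) := by
      funext t; ring_nf
    have he2 : Real.exp (b * v + (a * u + c)) = e := by rw [he]; ring_nf
    rw [heq, he2] at h
    simpa [pdv] using h
  have hsin : Real.sin (2 * Real.arctan e) = 2 * e / (1 + e ^ 2) := sin_two_arctan e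
  have hz : pdu (fun _ : ℝ × ℝ => (0:ℝ)) (u, v) = 0 := by simp [pdu]
  have hz' : pdv (fun _ : ℝ × ℝ => (0:ℝ)) (u, v) = 0 := by simp [pdv]
  constructor
  · rw [hdv, hz]
    simp only [add_zero, sub_zero, ← he, hsin]
    rw [hb]
    field_simp
  · rw [hdu, hz']
    simp only [add_zero, sub_zero, ← he, hsin]
    rw [ha]
    field_simp
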